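/- Let E ⊕ K be a direct sum of Hilbert spaces and U = [[A, B], [C, D]] a unitary operator on E ⊕ K (block decomposition). For any operator E(z) on K with ‖E(z)‖ < 1, define τ(z) = A + B E(z) (I − D E(z))⁻¹ C. Then I − τ(z)* τ(z) = C* (I − E(z)* D*)⁻¹ (I − E(z)* E(z)) (I − D E(z))⁻¹ C. -/

import Mathlib

open ContinuousLinearMap

set_option maxHeartbeats 1000000 in
/-- Fundamental transfer-function identity.  `U = [[A, B], [C, D]]` is a unitary on
`E ⊕ K` (expressed through the block relations `U*U = I`, `UU* = I`), `Ez` is a strict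
contraction on `K`, and `τ = A + B Ez (I − D Ez)⁻¹ C`.  Then
`I − τ*τ = C* (I − Ez* D*)⁻¹ (I − Ez* Ez) (I − D Ez)⁻¹ C`. -/
theorem transfer_function_identity
    {E K : Type*} [NormedAddCommGroup E] [InnerProductSpace ℂ E] [CompleteSpace E]
    [NormedAddCommGroup K] [InnerProductSpace ℂ K] [CompleteSpace K]
    (A : E →L[ℂ] E) (B : K →L[ℂ] E) (C : E →L[ℂ] K) (D : K →L[ℂ] K)
    -- `U* U = I` :
    (h1 : adjoint A ∘L A + adjoint C ∘L C = 1)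
    (h2 : adjoint A ∘L B + adjoint C ∘L D = 0)
    (h3 : adjoint B ∘L B + adjoint D ∘L D = 1)
    -- `U U* = I` :
    (h4 : A ∘L adjoint A + B ∘L adjoint B = 1)
    (h5 : A ∘L adjoint C + B ∘L adjoint D = 0)
    (h6 : C ∘L adjoint C + D ∘L adjoint D = 1)
    (Ez : K →L[ℂ] K) (hEz : ‖Ez‖ < 1) :
    (1 : E →L[ℂ] E) -
        adjoint (A + B ∘L Ez ∘L Ring.inverse (1 - D ∘L Ez) ∘L C) ∘L
          (A + B ∘L Ez ∘L Ring.inverse (1 - D ∘L Ez) ∘L C) =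
      adjoint C ∘L Ring.inverse (1 - adjoint Ez ∘L adjoint D) ∘L
        ((1 : K →L[ℂ] K) - adjoint Ez ∘L Ez) ∘L Ring.inverse (1 - D ∘L Ez) ∘L C := by
  -- ‖D‖ ≤ 1
  have hDle : ‖D‖ ≤ 1 := by
    refine opNorm_le_bound D zero_le_one fun x => ?_
    rw [one_mul]
    have h3x : adjoint B (B x) + adjoint D (D x) = x := by
      have := congrArg (fun (f : K →L[ℂ] K) => f x) h3
      simpa using this
    have hinner : (inner ℂ (adjoint B (B x) + adjoint D (D x)) x : ℂ) = inner ℂ x x := by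
      rw [h3x]
    rw [inner_add_left, adjoint_inner_left, adjoint_inner_left,
      inner_self_eq_norm_sq_to_K, inner_self_eq_norm_sq_to_K,
      inner_self_eq_norm_sq_to_K] at hinner
    have hsq : ‖B x‖ ^ 2 + ‖D x‖ ^ 2 = ‖x‖ ^ 2 := by exact_mod_cast hinner
    nlinarith [norm_nonneg (B x), norm_nonneg (D x), norm_nonneg x]
  set P : K →L[ℂ] K := D ∘L Ez with hPdef
  have hPn : ‖P‖ < 1 := by
    calc ‖P‖ ≤ ‖D‖ * ‖Ez‖ := opNorm_comp_le D Ez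
    _ ≤ 1 * ‖Ez‖ := mul_le_mul_of_nonneg_right hDle (norm_nonneg _)
    _ < 1 := by simpa using hEz
  have hu : IsUnit ((1 : K →L[ℂ] K) - P) := by
    simpa using (Units.oneSub P hPn).isUnit
  set N : K →L[ℂ] K := Ring.inverse ((1 : K →L[ℂ] K) - P) with hNdef
  have hMN : ((1 : K →L[ℂ] K) - P) * N = 1 := Ring.mul_inverse_cancel _ hu
  have hinvstar : Ring.inverse ((1 : K →L[ℂ] K) - adjoint Ez ∘L adjoint D) = star N := by
    rw [hNdef, ← Ring.inverse_star, star_sub, star_one]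
    congr 2
    rw [hPdef, star_eq_adjoint, adjoint_comp, ← star_eq_adjoint D, ← star_eq_adjoint Ez]
  have hstarP : star P = adjoint Ez ∘L adjoint D := by
    rw [star_eq_adjoint, hPdef]
    exact adjoint_comp D Ez
  clear_value N
  clear_value P
  have hN1 : N = 1 + P * N := by
    rw [sub_mul, one_mul, sub_eq_iff_eq_add] at hMN
    exact hMN
  have hN2 : star N = 1 + star N * star P := by
    have := congrArg star hN1
    rw [star_add, star_one, star_mul] at this
    exact this
  obtain ⟨Ns, hNs⟩ : ∃ Ns, star N = Ns := ⟨_, rfl⟩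
  rw [hNs] at hN2 hinvstar
  have key : Ns * N =
      1 + P * N + Ns * star P + Ns * star P * (P * N) := by
    conv_lhs => rw [hN2, hN1]
    rw [add_mul, one_mul, mul_add, mul_one]
    abel
  have hadjN : adjoint N = Ns := hNs ▸ (star_eq_adjoint N).symm
  -- main algebraic relations
  have hA : adjoint A ∘L A = 1 - adjoint C ∘L C := eq_sub_of_add_eq h1
  have hAB : adjoint A ∘L B = -(adjoint C ∘L D) := eq_neg_of_add_eq_zero_left h2
  have hBA : adjoint B ∘L A = -(adjoint D ∘L C) := by
    have : adjoint (adjoint A ∘L B) = adjoint (-(adjoint C ∘L D)) := by rw [hAB]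
    simp only [adjoint_comp, adjoint_adjoint, map_neg] at this
    exact this
  have hBB : adjoint B ∘L B = 1 - adjoint D ∘L D := eq_sub_of_add_eq h3
  set G : E →L[ℂ] K := Ez ∘L N ∘L C with hGdef
  have expand : adjoint (A + B ∘L G) ∘L (A + B ∘L G) =
      adjoint A ∘L A + (adjoint A ∘L B) ∘L G + adjoint G ∘L (adjoint B ∘L A)
      + adjoint G ∘L ((adjoint B ∘L B) ∘L G) := by
    ext x
    simp only [map_add, adjoint_comp, add_apply, comp_apply, add_comp, comp_add]
    abel
  rw [expand, hA, hAB, hBA, hBB, hinvstar]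
  have e1 : (-(adjoint C ∘L D)) ∘L G = -(adjoint C ∘L ((P * N) ∘L C)) := by
    ext x
    simp only [hGdef, hPdef, mul_def, neg_apply, comp_apply]
  have e2 : adjoint G ∘L (-(adjoint D ∘L C)) = -(adjoint C ∘L ((Ns * star P) ∘L C)) := by
    ext x
    simp only [hGdef, adjoint_comp, hstarP, hadjN, mul_def, neg_apply, comp_apply, map_neg,
      ← star_eq_adjoint Ez, ← star_eq_adjoint D]
  have hsDE : star (D ∘L Ez) = star Ez ∘L star D := by
    rw [star_eq_adjoint, adjoint_comp, ← star_eq_adjoint Ez, ← star_eq_adjoint D]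
  have e3 : adjoint G ∘L ((1 - adjoint D ∘L D) ∘L G) =
      adjoint C ∘L ((Ns * ((adjoint Ez ∘L Ez) * N)) ∘L C)
      - adjoint C ∘L ((Ns * star P * (P * N)) ∘L C) := by
    ext x
    simp only [hGdef, hPdef, hstarP, hadjN, adjoint_comp, mul_def, comp_apply,
      sub_apply, ContinuousLinearMap.one_apply, map_sub, ← star_eq_adjoint Ez, ← star_eq_adjoint D, hsDE]
  rw [e1, e2, e3]
  have e4 : (1 : E →L[ℂ] E) - adjoint C ∘L C = 1 - adjoint C ∘L ((1 : K →L[ℂ] K) ∘L C) := by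
    ext x; simp
  have key' : Ns ∘L ((1 - adjoint Ez ∘L Ez) ∘L (N ∘L C)) =
      ((1 : K →L[ℂ] K) + P * N + Ns * star P + Ns * star P * (P * N)
        - Ns * ((adjoint Ez ∘L Ez) * N)) ∘L C := by
    have : Ns * ((1 - adjoint Ez ∘L Ez) * N) =
        (1 : K →L[ℂ] K) + P * N + Ns * star P + Ns * star P * (P * N)
        - Ns * ((adjoint Ez ∘L Ez) * N) := by
      rw [sub_mul, one_mul, mul_sub, ← key]
    calc Ns ∘L ((1 - adjoint Ez ∘L Ez) ∘L (N ∘L C))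
        = (Ns * ((1 - adjoint Ez ∘L Ez) * N)) ∘L C := by
          ext x; simp only [mul_def, comp_apply]
      _ = _ := by rw [this]
  calc (1 : E →L[ℂ] E) - ((1 - adjoint C ∘L C) + -(adjoint C ∘L ((P * N) ∘L C))
        + -(adjoint C ∘L ((Ns * star P) ∘L C))
        + (adjoint C ∘L ((Ns * ((adjoint Ez ∘L Ez) * N)) ∘L C)
          - adjoint C ∘L ((Ns * star P * (P * N)) ∘L C)))
      = adjoint C ∘L (((1 : K →L[ℂ] K) + P * N + Ns * star P
          + Ns * star P * (P * N) - Ns * ((adjoint Ez ∘L Ez) * N)) ∘L C) := by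
        simp only [comp_add, add_comp, comp_sub, sub_comp, one_def, id_comp, comp_neg]
        abel
    _ = adjoint C ∘L (Ns ∘L ((1 - adjoint Ez ∘L Ez) ∘L (N ∘L C))) := by rw [key']
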